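/- Let f : ℂ^{n+1} → ℂ be a homogeneous polynomial and suppose the partial derivatives of f satisfy the linear relation ∑_{i=0}^{n} p_i · ∂f/∂x_i = 0 identically on ℂ^{n+1}, for a point p = (p_0, …, p_n) with p_0 ≠ 0. Then after the linear change of coordinates sending p to (1,0,…,0), the polynomial f does not depend on the first coordinate, i.e., ∂f/∂x_0 = 0 identically in the new coordinates. -/

import Mathlib

open MvPolynomial

lemma pderiv_aeval_chain {n m : ℕ} (k : Fin m)
    (g : Fin n → MvPolynomial (Fin m) ℂ) (f : MvPolynomial (Fin n) ℂ) :
    pderiv k (aeval g f) = ∑ i : Fin n, aeval g (pderiv i f) * pderiv k (g i) := by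
  induction f using MvPolynomial.induction_on with
  | C a => simp
  | add f₁ f₂ h₁ h₂ =>
      simp only [map_add, h₁, h₂, ← Finset.sum_add_distrib, add_mul]
  | mul_X f j h =>
      simp only [map_mul, aeval_X, pderiv_mul, map_add, h, Finset.sum_mul, add_mul,
        Finset.sum_add_distrib]
      refine congrArg₂ (· + ·) ?_ ?_
      · exact Finset.sum_congr rfl fun i _ => by ring
      · classical
        rw [Finset.sum_eq_single j]
        · simp [mul_comm]
        · intro i _ hij
          simp [pderiv_X_of_ne (Ne.symm hij)]
        · simp

/-- If the partial derivatives of a homogeneous polynomial `f` satisfy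
`∑ i, p i • ∂f/∂x_i = 0` identically, with `p 0 ≠ 0`, then after an invertible linear
change of coordinates `M` (given by a matrix whose `0`-th column is `p`, i.e. sending
the first basis vector `(1,0,…,0)` to `p`), the polynomial `f` in the new coordinates
does not depend on the first variable: `∂(f ∘ M)/∂x_0 = 0`. -/
theorem cone_apex_coordinate_change (n d : ℕ)
    (f : MvPolynomial (Fin (n + 1)) ℂ) (hf : f.IsHomogeneous d)
    (p : Fin (n + 1) → ℂ) (hp0 : p 0 ≠ 0)
    (hcone : ∑ i : Fin (n + 1), p i • pderiv i f = 0)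
    (M : Matrix (Fin (n + 1)) (Fin (n + 1)) ℂ) (hM : IsUnit M.det)
    (hMp : ∀ i, M i 0 = p i) :
    pderiv 0 (aeval (fun i : Fin (n + 1) =>
      ∑ j : Fin (n + 1), M i j • (X j : MvPolynomial (Fin (n + 1)) ℂ)) f) = 0 := by
  set g : Fin (n + 1) → MvPolynomial (Fin (n + 1)) ℂ :=
    fun i => ∑ j : Fin (n + 1), M i j • (X j : MvPolynomial (Fin (n + 1)) ℂ) with hg
  have hgd : ∀ i, pderiv (0 : Fin (n + 1)) (g i) = C (p i) := by
    intro i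
    classical
    rw [hg]
    simp only [map_sum]
    rw [Finset.sum_eq_single (0 : Fin (n + 1))]
    · simp [hMp i, MvPolynomial.smul_eq_C_mul]
    · intro j _ hj
      simp [MvPolynomial.smul_eq_C_mul, pderiv_X_of_ne hj]
    · simp
  rw [pderiv_aeval_chain]
  have : ∀ i : Fin (n + 1), aeval g (pderiv i f) * pderiv 0 (g i)
      = aeval g (p i • pderiv i f) := by
    intro i
    rw [hgd i]
    simp [MvPolynomial.smul_eq_C_mul, mul_comm]
  rw [Finset.sum_congr rfl fun i _ => this i, ← map_sum, hcone, map_zero]
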